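/- Let a : ℕ → ℝ be a sequence such that the alternating series ∑_{n=0}^∞ (-1)^n a(n) converges to a real number S. Define the forward difference operator Δ on sequences by (Δ a)(k) = a(k+1) − a(k). Then the Euler-transformed series ∑_{n=0}^∞ (-1)^n (Δ^n a)(0) / 2^{n+1} also converges, and its sum equals S. -/

import Mathlib

open Finset Filter Topology

/-- Forward difference operator: `(Δ a) k = a (k+1) - a k`. -/
def fwdDiffSeq (a : ℕ → ℝ) : ℕ → ℝ := fun k => a (k + 1) - a k

lemma fwdDiffSeq_iter_eq (a : ℕ → ℝ) (n : ℕ) :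
    (-1:ℝ)^n * (fwdDiffSeq^[n] a 0) = ∑ k ∈ range (n+1), (-1:ℝ)^k * (n.choose k) * a k := by
  have h : fwdDiffSeq = fwdDiff (1:ℕ) (G := ℝ) := rfl
  rw [h, fwdDiff_iter_eq_sum_shift, Finset.mul_sum]
  refine Finset.sum_congr rfl fun k hk => ?_
  rw [Finset.mem_range, Nat.lt_succ_iff] at hk
  have h1 : (0 + k • (1:ℕ)) = k := by simp
  rw [h1, zsmul_eq_mul]
  push_cast
  have hsign : (-1:ℝ)^n * (-1:ℝ)^(n-k) = (-1:ℝ)^k := by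
    rw [← pow_add]
    have : n + (n - k) = k + 2*(n-k) := by omega
    rw [this, pow_add, pow_mul]
    norm_num
  calc (-1:ℝ)^n * ((-1:ℝ)^(n-k) * (n.choose k) * a k)
      = ((-1:ℝ)^n * (-1:ℝ)^(n-k)) * (n.choose k) * a k := by ring
    _ = (-1:ℝ)^k * (n.choose k) * a k := by rw [hsign]

lemma euler_key (a : ℕ → ℝ) (N : ℕ) :
    (2:ℝ)^N * ∑ n ∈ range N, (-1:ℝ)^n * (fwdDiffSeq^[n] a 0) / 2^(n+1)
      = ∑ k ∈ range N, (N.choose (k+1) : ℝ) * ∑ n ∈ range (k+1), (-1:ℝ)^n * a n := by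
  set P : ℕ → ℝ := fun m => ∑ n ∈ range m, (-1:ℝ)^n * a n with hP
  induction N with
  | zero => simp
  | succ N ih =>
    rw [Finset.sum_range_succ, mul_add]
    have h2 : (2:ℝ)^(N+1) = 2 * 2^N := by ring
    have hne : (2:ℝ)^(N+1) ≠ 0 := by positivity
    have hterm : (2:ℝ)^(N+1) * ((-1:ℝ)^N * (fwdDiffSeq^[N] a 0) / 2^(N+1))
        = (-1:ℝ)^N * (fwdDiffSeq^[N] a 0) := by
      field_simp
    rw [hterm, h2, mul_assoc, ih, fwdDiffSeq_iter_eq]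
    -- rewrite the Newton sum in terms of P
    have hstep : ∀ j, (-1:ℝ)^j * (N.choose j) * a j = (N.choose j : ℝ) * (P (j+1) - P j) := by
      intro j
      have : P (j+1) = P j + (-1:ℝ)^j * a j := by
        simp only [hP, Finset.sum_range_succ]
      rw [this]; ring
    rw [Finset.sum_congr rfl (fun j _ => hstep j)]
    have hsplit : ∑ j ∈ range (N+1), (N.choose j : ℝ) * (P (j+1) - P j)
        = (∑ j ∈ range (N+1), (N.choose j : ℝ) * P (j+1))
          - ∑ j ∈ range (N+1), (N.choose j : ℝ) * P j := by
      rw [← Finset.sum_sub_distrib]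
      exact Finset.sum_congr rfl fun j _ => by ring
    have hshift : ∑ j ∈ range (N+1), (N.choose j : ℝ) * P j
        = ∑ j ∈ range N, (N.choose (j+1) : ℝ) * P (j+1) := by
      rw [Finset.sum_range_succ']
      simp [hP]
    have htarget : ∑ k ∈ range (N+1), ((N+1).choose (k+1) : ℝ) * P (k+1)
        = (∑ k ∈ range (N+1), (N.choose k : ℝ) * P (k+1))
          + ∑ k ∈ range N, (N.choose (k+1) : ℝ) * P (k+1) := by
      have h1 : ∀ k, ((N+1).choose (k+1) : ℝ) = (N.choose k : ℝ) + (N.choose (k+1) : ℝ) := by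
        intro k
        rw [Nat.choose_succ_succ]
        push_cast
        ring
      rw [Finset.sum_congr rfl (fun k _ => by rw [h1 k])]
      rw [Finset.sum_congr rfl (fun k (_ : k ∈ range (N+1)) =>
        (add_mul (N.choose k : ℝ) (N.choose (k+1) : ℝ) (P (k+1))))]
      rw [Finset.sum_add_distrib]
      congr 1
      rw [Finset.sum_range_succ]
      simp
    rw [hsplit, hshift, htarget]
    ring

lemma choose_div_pow_tendsto (k : ℕ) :
    Tendsto (fun N : ℕ => (N.choose (k+1) : ℝ) / 2^N) atTop (𝓝 0) := by
  have hb := tendsto_pow_const_div_const_pow_of_one_lt (k+1) (by norm_num : (1:ℝ) < 2)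
  refine squeeze_zero (fun N => by positivity) (fun N => ?_) hb
  gcongr
  exact_mod_cast Nat.choose_le_pow N (k+1)

lemma choose_succ_sum_div (N : ℕ) :
    ∑ k ∈ range N, (N.choose (k+1) : ℝ) / 2^N = 1 - (1/2:ℝ)^N := by
  have h1 : ∑ m ∈ range (N+1), (N.choose m : ℝ) = 2^N := by
    exact_mod_cast congrArg (Nat.cast : ℕ → ℝ) (Nat.sum_range_choose N)
  rw [Finset.sum_range_succ'] at h1
  simp only [Nat.choose_zero_right, Nat.cast_one] at h1
  rw [← Finset.sum_div]
  have h2 : ∑ k ∈ range N, (N.choose (k+1) : ℝ) = 2^N - 1 := by linarith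
  rw [h2]
  have : (2:ℝ)^N ≠ 0 := by positivity
  field_simp
  rw [mul_sub, mul_one, ← mul_pow]; norm_num

lemma toeplitz_zero (u : ℕ → ℝ) (hu : Tendsto u atTop (𝓝 0)) :
    Tendsto (fun N => ∑ k ∈ range N, (N.choose (k+1) : ℝ) / 2^N * u k) atTop (𝓝 0) := by
  rw [Metric.tendsto_atTop]
  intro ε hε
  -- bound for u
  obtain ⟨C, hC⟩ := hu.norm.bddAbove_range
  have hC' : ∀ k, |u k| ≤ C := fun k => hC ⟨k, rfl⟩
  have hC0 : 0 ≤ C := le_trans (abs_nonneg _) (hC' 0)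
  -- tail bound
  obtain ⟨K, hK⟩ := (Metric.tendsto_atTop.mp hu) (ε/2) (by positivity)
  have hK' : ∀ k, K ≤ k → |u k| ≤ ε/2 := by
    intro k hk
    have := hK k hk
    rw [Real.dist_eq, sub_zero] at this
    linarith
  -- head tends to 0
  have h1 : Tendsto (fun N => ∑ k ∈ range K, (N.choose (k+1) : ℝ) / 2^N * C) atTop (𝓝 0) := by
    have : Tendsto (fun N => ∑ k ∈ range K, (N.choose (k+1) : ℝ) / 2^N * C) atTop
        (𝓝 (∑ k ∈ range K, (0:ℝ))) := by
      apply tendsto_finset_sum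
      intro k _
      simpa using (choose_div_pow_tendsto k).mul_const C
    simpa using this
  obtain ⟨N0, hN0⟩ := (Metric.tendsto_atTop.mp h1) (ε/2) (by positivity)
  refine ⟨max N0 K, fun N hN => ?_⟩
  have hNK : K ≤ N := le_trans (le_max_right _ _) hN
  have hN0' : N0 ≤ N := le_trans (le_max_left _ _) hN
  rw [Real.dist_eq, sub_zero]
  have hw : ∀ k, (0:ℝ) ≤ (N.choose (k+1) : ℝ) / 2^N := fun k => by positivity
  calc |∑ k ∈ range N, (N.choose (k+1) : ℝ) / 2^N * u k|
      ≤ ∑ k ∈ range N, |(N.choose (k+1) : ℝ) / 2^N * u k| := Finset.abs_sum_le_sum_abs _ _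
    _ = ∑ k ∈ range N, (N.choose (k+1) : ℝ) / 2^N * |u k| := by
        refine Finset.sum_congr rfl fun k _ => ?_
        rw [abs_mul, abs_of_nonneg (hw k)]
    _ = (∑ k ∈ range K, (N.choose (k+1) : ℝ) / 2^N * |u k|)
        + ∑ k ∈ Ico K N, (N.choose (k+1) : ℝ) / 2^N * |u k| := by
        rw [Finset.sum_range_add_sum_Ico _ hNK]
    _ ≤ (∑ k ∈ range K, (N.choose (k+1) : ℝ) / 2^N * C)
        + ∑ k ∈ Ico K N, (N.choose (k+1) : ℝ) / 2^N * (ε/2) := by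
        gcongr with k hk k hk
        · exact hC' k
        · exact hK' k (Finset.mem_Ico.mp hk).1
    _ < ε/2 + ∑ k ∈ Ico K N, (N.choose (k+1) : ℝ) / 2^N * (ε/2) := by
        have := hN0 N hN0'
        rw [Real.dist_eq, sub_zero] at this
        have h2 := le_abs_self (∑ k ∈ range K, (N.choose (k+1) : ℝ) / 2^N * C)
        exact add_lt_add_of_lt_of_le (lt_of_le_of_lt h2 this) le_rfl
    _ ≤ ε/2 + ∑ k ∈ range N, (N.choose (k+1) : ℝ) / 2^N * (ε/2) := by
        gcongr
        intro k hk
        exact Finset.mem_range.mpr (Finset.mem_Ico.mp hk).2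
    _ ≤ ε/2 + ε/2 := by
        have : ∑ k ∈ range N, (N.choose (k+1) : ℝ) / 2^N * (ε/2)
            = (1 - (1/2:ℝ)^N) * (ε/2) := by
          rw [← Finset.sum_mul, choose_succ_sum_div]
        rw [this]
        nlinarith [pow_nonneg (by norm_num : (0:ℝ) ≤ 1/2) N, pow_le_one₀ (by norm_num : (0:ℝ) ≤ 1/2) (by norm_num : (1/2:ℝ) ≤ 1) (n := N)]
    _ = ε := by ring

/-- Euler's transformation of alternating series: if `∑ (-1)^n a n` converges to `S`,
then `∑ (-1)^n (Δ^n a) 0 / 2^(n+1)` also converges, with the same sum `S`. -/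
theorem euler_transform (a : ℕ → ℝ) (S : ℝ)
    (h : Filter.Tendsto (fun N => ∑ n ∈ Finset.range N, (-1 : ℝ) ^ n * a n)
      Filter.atTop (nhds S)) :
    Filter.Tendsto (fun N => ∑ n ∈ Finset.range N, (-1 : ℝ) ^ n * (fwdDiffSeq^[n] a 0) / 2 ^ (n + 1))
      Filter.atTop (nhds S) := by
  set P : ℕ → ℝ := fun m => ∑ n ∈ range m, (-1:ℝ)^n * a n with hP
  have hE : ∀ N, ∑ n ∈ range N, (-1:ℝ)^n * (fwdDiffSeq^[n] a 0) / 2^(n+1)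
      = (∑ k ∈ range N, (N.choose (k+1) : ℝ) / 2^N * (P (k+1) - S))
        + (1 - (1/2:ℝ)^N) * S := by
    intro N
    have hkey := euler_key a N
    have h2 : (2:ℝ)^N ≠ 0 := by positivity
    have hE1 : ∑ n ∈ range N, (-1:ℝ)^n * (fwdDiffSeq^[n] a 0) / 2^(n+1)
        = ∑ k ∈ range N, (N.choose (k+1) : ℝ) / 2^N * P (k+1) := by
      have := congrArg (fun x => x / (2:ℝ)^N) hkey
      rw [mul_div_cancel_left₀ _ h2] at this
      rw [this, Finset.sum_div]
      exact Finset.sum_congr rfl fun k _ => by ring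
    rw [hE1]
    have hws := choose_succ_sum_div N
    calc ∑ k ∈ range N, (N.choose (k+1) : ℝ) / 2^N * P (k+1)
        = ∑ k ∈ range N, ((N.choose (k+1) : ℝ) / 2^N * (P (k+1) - S)
            + (N.choose (k+1) : ℝ) / 2^N * S) := by
          exact Finset.sum_congr rfl fun k _ => by ring
      _ = (∑ k ∈ range N, (N.choose (k+1) : ℝ) / 2^N * (P (k+1) - S))
            + (∑ k ∈ range N, (N.choose (k+1) : ℝ) / 2^N) * S := by
          rw [Finset.sum_add_distrib, Finset.sum_mul]
      _ = _ := by rw [hws]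
  have hu : Tendsto (fun k => P (k+1) - S) atTop (𝓝 0) := by
    have : Tendsto (fun k => P (k+1)) atTop (𝓝 S) := h.comp (tendsto_add_atTop_nat 1)
    simpa using this.sub_const S
  have h1 := toeplitz_zero _ hu
  have h2 : Tendsto (fun N : ℕ => (1 - (1/2:ℝ)^N) * S) atTop (𝓝 S) := by
    have : Tendsto (fun N : ℕ => (1/2:ℝ)^N) atTop (𝓝 0) :=
      tendsto_pow_atTop_nhds_zero_of_norm_lt_one (by norm_num)
    have := ((tendsto_const_nhds (x := (1:ℝ))).sub this).mul_const S
    simpa using this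
  have := h1.add h2
  rw [zero_add] at this
  exact Tendsto.congr (fun N => (hE N).symm) this
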